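/- If p and p' are TRP pairs with sig(p) = sig(p'), then p ∼ p', and consequently lm(p) = lm(p'), i.e., p and p' are equivalent. -/

import Mathlib

namespace TRB

open MvPolynomial
open scoped Classical

/-- Monomials in the variables `x₁, …, xₙ`, identified with their exponent vectors;
a monomial `m₁` divides `m₂` iff the exponent vector of `m₁` is componentwise `≤`. -/
abbrev Mon (n : ℕ) := Fin n →₀ ℕ

/-- Module monomials (signatures) `x^α E_i` of the free module `P^d`. -/
abbrev Sig (n d : ℕ) := Mon n × Fin d

/-- The action of a monomial on a module monomial: `m • (x^α E_i) = (m x^α) E_i`. -/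
noncomputable def Sig.smul {n d : ℕ} (m : Mon n) (s : Sig n d) : Sig n d := (m + s.1, s.2)

/-- An admissible monomial order on the monomials of `P = K[x₁,…,xₙ]`:
a (strict) linear order such that `1 ⪯ m` for every monomial `m`, and
multiplication by a monomial is strictly monotone. -/
structure MonOrder (n : ℕ) where
  lt : Mon n → Mon n → Prop
  irrefl : ∀ a, ¬ lt a a
  trans : ∀ a b c, lt a b → lt b c → lt a c
  total : ∀ a b, lt a b ∨ a = b ∨ lt b a
  zero_lt : ∀ a, a ≠ 0 → lt 0 a
  mul_lt_mul : ∀ (m a b : Mon n), lt a b → lt (m + a) (m + b)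

/-- An admissible signature order on module monomials:
a (strict) linear order with `s ⪯ m • s` for every monomial `m`, and such that
multiplication by a monomial is strictly monotone. -/
structure SigOrder (n d : ℕ) where
  lt : Sig n d → Sig n d → Prop
  irrefl : ∀ s, ¬ lt s s
  trans : ∀ s t r, lt s t → lt t r → lt s r
  total : ∀ s t, lt s t ∨ s = t ∨ lt t s
  le_smul : ∀ (m : Mon n) (s : Sig n d), s = Sig.smul m s ∨ lt s (Sig.smul m s)
  smul_lt_smul : ∀ (m : Mon n) (s t : Sig n d), lt s t → lt (Sig.smul m s) (Sig.smul m t)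

/-- Non-strict version of a monomial order. -/
def MonOrder.le {n : ℕ} (mo : MonOrder n) (a b : Mon n) : Prop := mo.lt a b ∨ a = b

/-- Non-strict version of a signature order. -/
def SigOrder.le {n d : ℕ} (so : SigOrder n d) (s t : Sig n d) : Prop := so.lt s t ∨ s = t

/-- The `≺_m`-leading monomial of a polynomial (junk value `0` on the zero polynomial). -/
noncomputable def MonOrder.lm {n : ℕ} {K : Type*} [CommSemiring K] (mo : MonOrder n)
    (v : MvPolynomial (Fin n) K) : Mon n :=
  if h : ∃ m ∈ v.support, ∀ m' ∈ v.support, m' ≠ m → mo.lt m' m then h.choose else 0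

/-- The signature of a module element `u ∈ P^d`: the `≺_s`-largest module monomial
`x^α E_i` whose coefficient in `u` is nonzero (junk value on `u = 0`). -/
noncomputable def SigOrder.sig {n d : ℕ} [NeZero d] {K : Type*} [CommSemiring K]
    (so : SigOrder n d) (u : Fin d → MvPolynomial (Fin n) K) : Sig n d :=
  if h : ∃ s : Sig n d, (u s.2).coeff s.1 ≠ 0 ∧
      ∀ t : Sig n d, (u t.2).coeff t.1 ≠ 0 → t ≠ s → so.lt t s
  then h.choose else (0, ⟨0, Nat.pos_of_ne_zero (NeZero.ne d)⟩)

/-- The ambient type of candidate pairs `(u, v) ∈ P^d × P`. -/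
abbrev PairT (K : Type*) [CommSemiring K] (n d : ℕ) :=
  (Fin d → MvPolynomial (Fin n) K) × MvPolynomial (Fin n) K

variable {K : Type*} [Field K] {n d : ℕ}

/-- `(u, v)` is a pair (w.r.t. the input `f`) if `u ⬝ f = Σ_i u_i f_i = v`. -/
def IsPair (f : Fin d → MvPolynomial (Fin n) K) (p : PairT K n d) : Prop :=
  ∑ i, p.1 i * f i = p.2

/-- Leading monomial of a pair: `lm p = lm v`. -/
noncomputable def lmP (mo : MonOrder n) (p : PairT K n d) : Mon n := mo.lm p.2

/-- Signature of a pair: `sig p = sig u`. -/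
noncomputable def sigP [NeZero d] (so : SigOrder n d) (p : PairT K n d) : Sig n d :=
  so.sig p.1

/-- The pair order: `p ≺_p q` iff `lm(p)·sig(q) ≺_s lm(q)·sig(p)`. -/
def PairLt [NeZero d] (mo : MonOrder n) (so : SigOrder n d) (p q : PairT K n d) : Prop :=
  so.lt (Sig.smul (lmP mo p) (sigP so q)) (Sig.smul (lmP mo q) (sigP so p))

/-- Pairs are similar if `lm(p)·sig(q) = lm(q)·sig(p)`. -/
def Similar [NeZero d] (mo : MonOrder n) (so : SigOrder n d) (p q : PairT K n d) : Prop :=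
  Sig.smul (lmP mo p) (sigP so q) = Sig.smul (lmP mo q) (sigP so p)

/-- `p ⪯_p q`. -/
def PairLE [NeZero d] (mo : MonOrder n) (so : SigOrder n d) (p q : PairT K n d) : Prop :=
  PairLt mo so p q ∨ Similar mo so p q

/-- Pairs are equivalent if they have the same signature and the same leading monomial. -/
def Equivalent [NeZero d] (mo : MonOrder n) (so : SigOrder n d) (p q : PairT K n d) : Prop :=
  sigP so p = sigP so q ∧ lmP mo p = lmP mo q

/-- `p` is top reducible by `q`: both non-syzygy, `p ≺_p q` and `lm(q) ∣ lm(p)`. -/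
def TopRed [NeZero d] (mo : MonOrder n) (so : SigOrder n d) (p q : PairT K n d) : Prop :=
  p.2 ≠ 0 ∧ q.2 ≠ 0 ∧ PairLt mo so p q ∧ lmP mo q ≤ lmP mo p

/-- A TRP pair: a non-syzygy pair that is top reducible by no pair. -/
def IsTRP [NeZero d] (f : Fin d → MvPolynomial (Fin n) K) (mo : MonOrder n)
    (so : SigOrder n d) (p : PairT K n d) : Prop :=
  IsPair f p ∧ p.2 ≠ 0 ∧ ∀ q : PairT K n d, IsPair f q → ¬ TopRed mo so p q

/-- Divisibility of signatures: `x^α E_i ∣ x^β E_j` iff `i = j` and `x^α ∣ x^β`. -/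
def SigDvd {n d : ℕ} (s t : Sig n d) : Prop := s.2 = t.2 ∧ s.1 ≤ t.1

/-- A TRB pair: a TRP pair `p` such that no TRP pair similar to `p` has signature
properly dividing `sig p`. -/
def IsTRB [NeZero d] (f : Fin d → MvPolynomial (Fin n) K) (mo : MonOrder n)
    (so : SigOrder n d) (p : PairT K n d) : Prop :=
  IsTRP f mo so p ∧ ∀ q : PairT K n d, IsTRP f mo so q → Similar mo so p q →
    SigDvd (sigP so q) (sigP so p) → sigP so q = sigP so p

/-- A signature is syzygy if it is the signature of a syzygy pair `(u, 0)`, `u ≠ 0`. -/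
def IsSyzygySig [NeZero d] (f : Fin d → MvPolynomial (Fin n) K) (so : SigOrder n d)
    (s : Sig n d) : Prop :=
  ∃ u : Fin d → MvPolynomial (Fin n) K, u ≠ 0 ∧ IsPair f (u, 0) ∧ so.sig u = s

/-- The sub-order `≺_{s,i}` on monomials: `x^α ≺_{s,i} x^β` iff `x^α E_i ≺_s x^β E_i`. -/
def SubOrder {n d : ℕ} (so : SigOrder n d) (i : Fin d) (a b : Mon n) : Prop :=
  so.lt (a, i) (b, i)

/-- The sub-order `≺_{s,i}` coincides with `≺_m`. -/
def EqOrders {n d : ℕ} (so : SigOrder n d) (mo : MonOrder n) (i : Fin d) : Prop :=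
  ∀ a b : Mon n, SubOrder so i a b ↔ mo.lt a b

/-- `≺_m` and `≺_s` are almost compatible: either every sub-order `≺_{s,i}` coincides
with `≺_m`, or there is exactly one index `k` with `≺_{s,k} ≠ ≺_m`, and this `k`
satisfies `x^α E_k ≺_s E_i` for every monomial `x^α` and every index `i ≠ k`. -/
def AlmostCompatible {n d : ℕ} (mo : MonOrder n) (so : SigOrder n d) : Prop :=
  (∀ i, EqOrders so mo i) ∨
  (∃ k, ¬ EqOrders so mo k ∧ (∀ i, i ≠ k → EqOrders so mo i) ∧
    ∀ (a : Mon n) (i : Fin d), i ≠ k → so.lt (a, k) ((0 : Mon n), i))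

/-- `≺_m` and `≺_s` are compatible: `s₁ ⪯_s s₂` and `m₁ ⪯_m m₂` imply
`m₁·s₁ ⪯_s m₂·s₂`, with equality only when `s₁ = s₂` and `m₁ = m₂`. -/
def Compatible {n d : ℕ} (mo : MonOrder n) (so : SigOrder n d) : Prop :=
  ∀ (s₁ s₂ : Sig n d) (m₁ m₂ : Mon n), so.le s₁ s₂ → mo.le m₁ m₂ →
    so.le (Sig.smul m₁ s₁) (Sig.smul m₂ s₂) ∧
    (Sig.smul m₁ s₁ = Sig.smul m₂ s₂ → s₁ = s₂ ∧ m₁ = m₂)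

/-- The multiplied pair `m·p = (X^m · u, X^m · v)`. -/
noncomputable def mulPair (m : Mon n) (p : PairT K n d) : PairT K n d :=
  (fun i => monomial m (1 : K) * p.1 i, monomial m (1 : K) * p.2)

/-- `[m, p]` is the J-pair of the non-similar non-syzygy pairs `p₁, p₂`:
`p` is the `≺_p`-smaller of the two and `m·lm(p) = lcm(lm p₁, lm p₂)`. -/
def IsJPair [NeZero d] (mo : MonOrder n) (so : SigOrder n d) (p₁ p₂ : PairT K n d)
    (m : Mon n) (p : PairT K n d) : Prop :=
  p₁.2 ≠ 0 ∧ p₂.2 ≠ 0 ∧ ¬ Similar mo so p₁ p₂ ∧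
  ((PairLt mo so p₁ p₂ ∧ p = p₁) ∨ (PairLt mo so p₂ p₁ ∧ p = p₂)) ∧
  m + lmP mo p = lmP mo p₁ ⊔ lmP mo p₂

/-- `G` is a Gröbner basis of the ideal `⟨f₁,…,f_d⟩` w.r.t. `≺_m`: `G` consists of
elements of the ideal, and for every nonzero `v` in the ideal there is a nonzero
`g ∈ G` with `lm g ∣ lm v`. -/
def IsGroebnerBasis (mo : MonOrder n) (f : Fin d → MvPolynomial (Fin n) K)
    (G : Set (MvPolynomial (Fin n) K)) : Prop :=
  (∀ g ∈ G, g ∈ Ideal.span (Set.range f)) ∧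
  ∀ v ∈ Ideal.span (Set.range f), v ≠ 0 →
    ∃ g ∈ G, g ≠ 0 ∧ mo.lm g ≤ mo.lm v


private lemma exists_strict_max {α : Type*} (lt : α → α → Prop)
    (htrans : ∀ a b c, lt a b → lt b c → lt a c)
    (htotal : ∀ a b, lt a b ∨ a = b ∨ lt b a)
    (S : Finset α) (hS : S.Nonempty) :
    ∃ m ∈ S, ∀ x ∈ S, x ≠ m → lt x m := by
  classical
  induction S using Finset.induction_on with
  | empty => exact absurd hS (by simp)
  | @insert a S ha ih =>
    rcases S.eq_empty_or_nonempty with rfl | hS'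
    · exact ⟨a, by simp, by simp⟩
    · obtain ⟨m, hmS, hm⟩ := ih hS'
      rcases htotal a m with hlt | rfl | hlt
      · refine ⟨m, Finset.mem_insert_of_mem hmS, ?_⟩
        intro x hx hxm
        rcases Finset.mem_insert.1 hx with rfl | hx
        · exact hlt
        · exact hm x hx hxm
      · exact ⟨a, Finset.mem_insert_self _ _, fun x hx hxm => by
          rcases Finset.mem_insert.1 hx with rfl | hx
          · exact absurd rfl hxm
          · exact hm x hx hxm⟩
      · refine ⟨a, Finset.mem_insert_self _ _, ?_⟩
        intro x hx hxa
        rcases Finset.mem_insert.1 hx with rfl | hx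
        · exact absurd rfl hxa
        · by_cases hxm : x = m
          · exact hxm ▸ hlt
          · exact htrans _ _ _ (hm x hx hxm) hlt

private lemma lm_spec {n : ℕ} {K : Type*} [CommSemiring K] (mo : MonOrder n)
    {v : MvPolynomial (Fin n) K} (hv : v ≠ 0) :
    mo.lm v ∈ v.support ∧ ∀ m' ∈ v.support, m' ≠ mo.lm v → mo.lt m' (mo.lm v) := by
  have hex : ∃ m ∈ v.support, ∀ m' ∈ v.support, m' ≠ m → mo.lt m' m :=
    exists_strict_max mo.lt mo.trans mo.total _ (MvPolynomial.support_nonempty.2 hv)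
  rw [MonOrder.lm, dif_pos hex]
  exact ⟨hex.choose_spec.1, hex.choose_spec.2⟩

private lemma lm_eq {n : ℕ} {K : Type*} [CommSemiring K] (mo : MonOrder n)
    {v : MvPolynomial (Fin n) K} {L : Mon n}
    (h1 : L ∈ v.support) (h2 : ∀ m' ∈ v.support, m' ≠ L → mo.lt m' L) : mo.lm v = L := by
  have hv : v ≠ 0 := by
    intro h; rw [h] at h1; simp at h1
  obtain ⟨hm, hd⟩ := lm_spec mo hv
  by_contra hne
  exact mo.irrefl _ (mo.trans _ _ _ (h2 _ hm hne) (hd _ h1 fun e => hne e.symm))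

private lemma sig_spec {n d : ℕ} [NeZero d] {K : Type*} [CommSemiring K]
    (so : SigOrder n d) {u : Fin d → MvPolynomial (Fin n) K}
    (hu : ∃ t : Sig n d, (u t.2).coeff t.1 ≠ 0) :
    (u (so.sig u).2).coeff (so.sig u).1 ≠ 0 ∧
    ∀ t : Sig n d, (u t.2).coeff t.1 ≠ 0 → t ≠ so.sig u → so.lt t (so.sig u) := by
  classical
  set S : Finset (Sig n d) := Finset.univ.biUnion
    (fun i => (u i).support.image fun m => ((m, i) : Sig n d)) with hSdef
  have hmem : ∀ t : Sig n d, t ∈ S ↔ (u t.2).coeff t.1 ≠ 0 := by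
    rintro ⟨m, i⟩
    simp [hSdef, Prod.ext_iff, MvPolynomial.mem_support_iff]
  have hSne : S.Nonempty := ⟨hu.choose, (hmem _).2 hu.choose_spec⟩
  obtain ⟨m, hmS, hm⟩ := exists_strict_max so.lt so.trans so.total S hSne
  have hex : ∃ s : Sig n d, (u s.2).coeff s.1 ≠ 0 ∧
      ∀ t : Sig n d, (u t.2).coeff t.1 ≠ 0 → t ≠ s → so.lt t s :=
    ⟨m, (hmem m).1 hmS, fun t ht htm => hm t ((hmem t).2 ht) htm⟩
  rw [SigOrder.sig, dif_pos hex]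
  exact ⟨hex.choose_spec.1, hex.choose_spec.2⟩

private lemma key_lemma {K : Type*} [Field K] {n d : ℕ} [NeZero d]
    (mo : MonOrder n) (so : SigOrder n d) (f : Fin d → MvPolynomial (Fin n) K)
    (p p' : PairT K n d) (hp : IsTRP f mo so p) (hp' : IsTRP f mo so p')
    (h : sigP so p = sigP so p') (hlt : mo.lt (lmP mo p') (lmP mo p)) : False := by
  classical
  obtain ⟨hpair, hv, hnot⟩ := hp
  obtain ⟨hpair', hv', _⟩ := hp'
  -- nonzero u's
  have hu : ∃ t : Sig n d, (p.1 t.2).coeff t.1 ≠ 0 := by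
    by_contra hc
    push_neg at hc
    apply hv
    rw [← hpair]
    have : ∀ i, p.1 i = 0 := fun i => by
      ext m; exact hc (m, i)
    simp [this]
  have hu' : ∃ t : Sig n d, (p'.1 t.2).coeff t.1 ≠ 0 := by
    by_contra hc
    push_neg at hc
    apply hv'
    rw [← hpair']
    have : ∀ i, p'.1 i = 0 := fun i => by
      ext m; exact hc (m, i)
    simp [this]
  obtain ⟨ha, hdom⟩ := sig_spec so hu
  obtain ⟨ha', hdom'⟩ := sig_spec so hu'
  set s : Sig n d := so.sig p.1 with hs
  have hss' : so.sig p'.1 = s := h.symm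
  rw [hss'] at ha' hdom'
  set a : K := (p.1 s.2).coeff s.1 with hadef
  set a' : K := (p'.1 s.2).coeff s.1 with ha'def
  set c : K := a * a'⁻¹ with hcdef
  set q : PairT K n d := (fun i => p.1 i - C c * p'.1 i, p.2 - C c * p'.2) with hqdef
  have hqpair : IsPair f q := by
    simp only [IsPair, hqdef, sub_mul, Finset.sum_sub_distrib, mul_assoc, ← Finset.mul_sum]
    rw [hpair, hpair']
  set L : Mon n := mo.lm p.2 with hL
  obtain ⟨hLmem, hLdom⟩ := lm_spec mo hv
  obtain ⟨hLmem', hLdom'⟩ := lm_spec mo hv'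
  have hlt2 : mo.lt (mo.lm p'.2) (mo.lm p.2) := hlt
  have hLnot : L ∉ (p'.2).support := by
    intro hmem
    by_cases he : L = mo.lm p'.2
    · have heq : mo.lm p'.2 = mo.lm p.2 := he.symm.trans hL
      rw [heq] at hlt2; exact mo.irrefl _ hlt2
    · exact mo.irrefl _ (mo.trans _ _ _ (hLdom' _ hmem he) hlt2)
  have hcoeffL : q.2.coeff L = p.2.coeff L := by
    have : (p'.2).coeff L = 0 := MvPolynomial.notMem_support_iff.1 hLnot
    simp [hqdef, MvPolynomial.coeff_C_mul, this]
  have hqv : q.2 ≠ 0 := by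
    intro h0
    apply MvPolynomial.mem_support_iff.1 hLmem
    have := hcoeffL
    rw [h0] at this
    simpa using this.symm
  have hLq : mo.lm q.2 = L := by
    apply lm_eq mo
    · rw [MvPolynomial.mem_support_iff, hcoeffL]
      exact MvPolynomial.mem_support_iff.1 hLmem
    · intro m' hm' hne
      have hsub : m' ∈ p.2.support ∪ p'.2.support := by
        rw [Finset.mem_union, MvPolynomial.mem_support_iff, MvPolynomial.mem_support_iff]
        by_contra hc
        push_neg at hc
        apply MvPolynomial.mem_support_iff.1 hm'
        simp [hqdef, MvPolynomial.coeff_C_mul, hc.1, hc.2]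
      rcases Finset.mem_union.1 hsub with hmem | hmem
      · exact hLdom _ hmem hne
      · by_cases he : m' = mo.lm p'.2
        · rw [he]; exact hlt2
        · exact mo.trans _ _ _ (hLdom' _ hmem he) hlt2
  -- signature of q is < s
  have hqu : ∃ t : Sig n d, (q.1 t.2).coeff t.1 ≠ 0 := by
    by_contra hc
    push_neg at hc
    apply hqv
    rw [← hqpair]
    have h0 : ∀ i, p.1 i - C c * p'.1 i = 0 := fun i => by
      ext m; exact hc (m, i)
    show ∑ i, (p.1 i - C c * p'.1 i) * f i = 0
    simp only [h0, zero_mul, Finset.sum_const_zero]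
  obtain ⟨hb, _⟩ := sig_spec so hqu
  have hcoeffs : (q.1 s.2).coeff s.1 = 0 := by
    have ha'ne : a' ≠ 0 := ha'
    simp only [hqdef, MvPolynomial.coeff_sub, MvPolynomial.coeff_C_mul]
    rw [← hadef, ← ha'def, hcdef]
    field_simp
    simp
  have hsigq : so.lt (so.sig q.1) s := by
    have hne : so.sig q.1 ≠ s := by
      intro he
      exact hb (he ▸ hcoeffs)
    have hcoeff_or : ((p.1 (so.sig q.1).2).coeff (so.sig q.1).1 ≠ 0) ∨
        ((p'.1 (so.sig q.1).2).coeff (so.sig q.1).1 ≠ 0) := by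
      by_contra hc
      push_neg at hc
      apply hb
      have hc1 := hc.1
      have hc2 := hc.2
      simp only [hqdef] at hc1 hc2 ⊢
      simp [MvPolynomial.coeff_C_mul, hc1, hc2]
    rcases hcoeff_or with hco | hco
    · exact hdom _ hco hne
    · exact hdom' _ hco hne
  -- q top-reduces p
  apply hnot q hqpair
  refine ⟨hv, hqv, ?_, ?_⟩
  · show so.lt (Sig.smul (lmP mo p) (sigP so q)) (Sig.smul (lmP mo q) (sigP so p))
    have h1 : lmP mo q = lmP mo p := hLq
    rw [h1]
    exact so.smul_lt_smul _ _ _ hsigq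
  · have h1 : lmP mo q = lmP mo p := hLq
    rw [h1]

/-- If `p` and `p'` are TRP pairs with `sig p = sig p'`, then `p ∼ p'`,
and consequently `lm p = lm p'`, i.e., `p` and `p'` are equivalent. -/
theorem TRP_same_sig_similar {K : Type*} [Field K] {n d : ℕ} [NeZero d]
    (mo : MonOrder n) (so : SigOrder n d) (f : Fin d → MvPolynomial (Fin n) K)
    (p p' : PairT K n d) (hp : IsTRP f mo so p) (hp' : IsTRP f mo so p')
    (h : sigP so p = sigP so p') :
    Similar mo so p p' ∧ lmP mo p = lmP mo p' := by
  have hlm : lmP mo p = lmP mo p' := by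
    rcases mo.total (lmP mo p) (lmP mo p') with hlt | heq | hlt
    · exact absurd hlt (fun hl => key_lemma mo so f p' p hp' hp h.symm hl)
    · exact heq
    · exact absurd hlt (fun hl => key_lemma mo so f p p' hp hp' h hl)
  refine ⟨?_, hlm⟩
  unfold Similar
  rw [h, hlm]

end TRB
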